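/- Let q be a nonzero complex number with q² ≠ 1 and let B be an associative unital ℂ-algebra containing families of elements e_i (i ≥ 0) and f_j (j ≥ 1) satisfying e_i e_j = −e_j e_i, f_i f_j = −f_j f_i, and e_i f_j = −f_j e_i for all admissible indices. Then in B[[z]] one has (∑_{j≥0} e_j z^j) · (∑_{a≥1} f_a z^a) · (∑_{l≥0} z^l ∑_{i=0}^{l} (q^{i+1}[i+1] + q(l−i)) e_i f_{l+1−i}) = 0. -/

import Mathlib

open PowerSeries Finset

section Aux
variable {B : Type*} [Ring B] [Algebra ℂ B]

omit [Algebra ℂ B] in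
lemma mk_mul_anti (g h : ℕ → B) (H : ∀ i j, g i * h j = -(h j * g i)) :
    PowerSeries.mk g * PowerSeries.mk h = -(PowerSeries.mk h * PowerSeries.mk g) := by
  ext n
  rw [map_neg, PowerSeries.coeff_mul, PowerSeries.coeff_mul]
  rw [← Finset.Nat.sum_antidiagonal_swap (f := fun p => coeff p.1 (mk h) * coeff p.2 (mk g))]
  simp only [Prod.fst_swap, Prod.snd_swap, coeff_mk, ← Finset.sum_neg_distrib]
  exact Finset.sum_congr rfl fun p _ => by rw [H]

lemma mk_sq_zero (g : ℕ → B) (H : ∀ i j, g i * g j = -(g j * g i)) :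
    PowerSeries.mk g * PowerSeries.mk g = 0 := by
  have h := mk_mul_anti g g H
  have h2 : (2 : ℂ) • (PowerSeries.mk g * PowerSeries.mk g) = 0 := by
    rw [two_smul]
    nth_rewrite 1 [h]
    simp
  have := congrArg (fun x => ((2:ℂ)⁻¹) • x) h2
  simpa [smul_smul] using this

end Aux

noncomputable def qInt (q : ℂ) (s : ℕ) : ℂ := (q ^ s - q⁻¹ ^ s) / (q - q⁻¹)

theorem EF_times_x_eq_zero (q : ℂ) (hq : q ≠ 0) (hq2 : q ^ 2 ≠ 1)
    (B : Type*) [Ring B] [Algebra ℂ B] (e f : ℕ → B)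
    (hee : ∀ i j : ℕ, e i * e j = -(e j * e i))
    (hff : ∀ i j : ℕ, 1 ≤ i → 1 ≤ j → f i * f j = -(f j * f i))
    (hef : ∀ i j : ℕ, 1 ≤ j → e i * f j = -(f j * e i)) :
    (PowerSeries.mk fun j => e j)
        * (PowerSeries.mk fun a => if a = 0 then 0 else f a)
        * (PowerSeries.mk fun l => ∑ i ∈ Finset.range (l + 1),
            (q ^ (i + 1) * qInt q (i + 1) + q * ((l : ℂ) - (i : ℂ))) • (e i * f (l + 1 - i)))
      = 0 := by
  have hfe : ∀ i j : ℕ, f (i + 1) * e j = -(e j * f (i + 1)) := fun i j => by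
    rw [hef j (i + 1) (Nat.succ_le_succ (Nat.zero_le i)), neg_neg]
  set E : PowerSeries B := PowerSeries.mk fun j => e j with hE
  set F : PowerSeries B := PowerSeries.mk fun a => if a = 0 then 0 else f a with hF
  set F' : PowerSeries B := PowerSeries.mk fun k => f (k + 1) with hF'
  set Φ : PowerSeries B := PowerSeries.mk fun i => (q ^ (i + 1) * qInt q (i + 1)) • e i with hΦ
  set Ψ : PowerSeries B := PowerSeries.mk fun k => (q * (k : ℂ)) • f (k + 1) with hΨ
  have hFX : F = F' * PowerSeries.X := by
    ext n
    cases n with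
    | zero => simp [hF, PowerSeries.coeff_zero_mul_X]
    | succ m => simp [hF, PowerSeries.coeff_succ_mul_X, hF']
  have hx : (PowerSeries.mk fun l => ∑ i ∈ Finset.range (l + 1),
      (q ^ (i + 1) * qInt q (i + 1) + q * ((l : ℂ) - (i : ℂ))) • (e i * f (l + 1 - i)))
      = Φ * F' + E * Ψ := by
    ext l
    rw [map_add, PowerSeries.coeff_mul, PowerSeries.coeff_mul,
      Finset.Nat.sum_antidiagonal_eq_sum_range_succ_mk,
      Finset.Nat.sum_antidiagonal_eq_sum_range_succ_mk, ← Finset.sum_add_distrib,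
      PowerSeries.coeff_mk]
    refine Finset.sum_congr rfl fun i hi => ?_
    have hil : i ≤ l := Nat.lt_succ_iff.mp (Finset.mem_range.mp hi)
    have h1 : l + 1 - i = (l - i) + 1 := by omega
    have h2 : ((l - i : ℕ) : ℂ) = (l : ℂ) - (i : ℂ) := by
      push_cast [hil]; ring
    simp only [hΦ, hΨ, hE, hF', PowerSeries.coeff_mk]
    rw [smul_mul_assoc, mul_smul_comm, ← add_smul, h1, h2]
  rw [hx, mul_add]
  have hFE' : F' * Φ = -(Φ * F') := by
    refine mk_mul_anti _ _ fun i j => ?_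
    rw [mul_smul_comm, smul_mul_assoc, hfe i j, smul_neg]
  have hF'E : F' * E = -(E * F') := mk_mul_anti _ _ fun i j => hfe i j
  have hF'F' : F' * F' = 0 := mk_sq_zero _ fun i j =>
    hff (i + 1) (j + 1) (Nat.succ_le_succ (Nat.zero_le i)) (Nat.succ_le_succ (Nat.zero_le j))
  have hEE : E * E = 0 := mk_sq_zero _ hee
  have hXΦ := (PowerSeries.commute_X Φ).eq
  have hXE := (PowerSeries.commute_X E).eq
  have hXΨ := (PowerSeries.commute_X Ψ).eq
  have h1 : E * F * (Φ * F') = 0 := by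
    calc E * F * (Φ * F') = E * (F' * (PowerSeries.X * Φ) * F') := by
          rw [hFX]; simp only [mul_assoc]
      _ = E * (F' * Φ) * (PowerSeries.X * F') := by
          rw [← hXΦ]; simp only [mul_assoc]
      _ = -(E * Φ * (F' * F' * PowerSeries.X)) := by
          rw [hFE', ← (PowerSeries.commute_X F').eq]; simp only [mul_neg, neg_mul, mul_assoc]
      _ = 0 := by rw [hF'F']; simp
  have h2 : E * F * (E * Ψ) = 0 := by
    calc E * F * (E * Ψ) = E * (F' * (PowerSeries.X * E) * Ψ) := by
          rw [hFX]; simp only [mul_assoc]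
      _ = E * (F' * E) * (PowerSeries.X * Ψ) := by
          rw [← hXE]; simp only [mul_assoc]
      _ = -(E * E * (F' * (PowerSeries.X * Ψ))) := by
          rw [hF'E]; simp only [mul_neg, neg_mul, mul_assoc]
      _ = 0 := by rw [hEE]; simp
  rw [h1, h2, add_zero]
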